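/- Let f : ℝ → ℝ be Lipschitz and g ∈ L¹(ℝ) bounded and such that (x,α) ↦ (g(x)-g(x-α))/((f(x)-f(x-α))²+α²) is integrable on ℝ × {|α| > ε} for each ε > 0 with uniform bounds. Then ∫_ℝ L_f[g](x) dx = 0, where L_f[g](x) = p.v.∫_ℝ (g(x)-g(x-α))/((f(x)-f(x-α))²+α²) dα. -/
import Mathlib

open Real MeasureTheory Set Filter Topology

theorem stmt_15 (f g L : ℝ → ℝ) (K Cg : ℝ)
    (hf : ∀ x y : ℝ, |f x - f y| ≤ K * |x - y|)
    (hg_int : Integrable g) (hg_bdd : ∀ x, |g x| ≤ Cg)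
    (hpv : ∀ x : ℝ, Tendsto (fun ε : ℝ =>
        ∫ α in {a : ℝ | ε ≤ |a|},
          (g x - g (x - α)) / ((f x - f (x - α))^2 + α^2))
      (nhdsWithin 0 (Ioi 0)) (nhds (L x)))
    (hint : ∀ ε : ℝ, 0 < ε → IntegrableOn
        (fun q : ℝ × ℝ =>
          (g q.1 - g (q.1 - q.2)) / ((f q.1 - f (q.1 - q.2))^2 + q.2^2))
        {q : ℝ × ℝ | ε ≤ |q.2|})
    (hL_int : Integrable L)
    (hunif : Tendsto (fun ε : ℝ =>
        ∫ x : ℝ, ∫ α in {a : ℝ | ε ≤ |a|},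
          (g x - g (x - α)) / ((f x - f (x - α))^2 + α^2))
      (nhdsWithin 0 (Ioi 0)) (nhds (∫ x : ℝ, L x))) :
    ∫ x : ℝ, L x = 0 := by
  set F : ℝ × ℝ → ℝ := fun q =>
    (g q.1 - g (q.1 - q.2)) / ((f q.1 - f (q.1 - q.2))^2 + q.2^2) with hF
  -- each truncated double integral vanishes by antisymmetry
  have key : ∀ ε : ℝ, 0 < ε →
      (∫ x : ℝ, ∫ α in {a : ℝ | ε ≤ |a|}, F (x, α)) = 0 := by
    intro ε hε
    set S : Set ℝ := {a : ℝ | ε ≤ |a|} with hSdef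
    have hS : MeasurableSet S := (isClosed_le continuous_const continuous_abs).measurableSet
    have hprod : {q : ℝ × ℝ | ε ≤ |q.2|} = (univ : Set ℝ) ×ˢ S := by
      ext q; simp [hSdef]
    have hI : IntegrableOn F ((univ : Set ℝ) ×ˢ S) := by
      rw [← hprod]; exact hint ε hε
    have hI' : Integrable F ((volume.restrict (univ : Set ℝ)).prod (volume.restrict S)) := by
      rwa [IntegrableOn, Measure.volume_eq_prod, ← Measure.prod_restrict] at hI
    -- Fubini in both orders
    have fub1 : (∫ x : ℝ, ∫ α in S, F (x, α)) =
        ∫ z, F z ∂((volume.restrict (univ : Set ℝ)).prod (volume.restrict S)) := by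
      rw [MeasureTheory.integral_prod F hI']
      simp [Measure.restrict_univ]
    have fub2 : (∫ z, F z ∂((volume.restrict (univ : Set ℝ)).prod (volume.restrict S))) =
        ∫ α in S, ∫ x : ℝ, F (x, α) := by
      rw [MeasureTheory.integral_prod_symm F hI']
      simp [Measure.restrict_univ]
    set h : ℝ → ℝ := fun α => ∫ x : ℝ, F (x, α) with hh
    -- h is odd
    have hodd : ∀ α : ℝ, h α = -h (-α) := by
      intro α
      have ht : (∫ x : ℝ, F (x + α, α)) = ∫ x : ℝ, F (x, α) :=
        integral_add_right_eq_self (fun x => F (x, α)) α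
      have hpt : ∀ x : ℝ, F (x + α, α) = -F (x, -α) := by
        intro x
        simp only [hF]
        have h1 : x + α - α = x := by ring
        have h2 : x - -α = x + α := by ring
        rw [h1, h2, show (f x - f (x + α))^2 + (-α)^2 = (f (x + α) - f x)^2 + α^2 by ring,
          ← neg_div, neg_sub]
      calc h α = ∫ x : ℝ, F (x + α, α) := ht.symm
        _ = ∫ x : ℝ, -F (x, -α) := by simp_rw [hpt]
        _ = -∫ x : ℝ, F (x, -α) := integral_neg _
        _ = -h (-α) := rfl
    -- S is symmetric, so ∫_S h(-α) = ∫_S h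
    have hsymm : (∫ α in S, h (-α)) = ∫ α in S, h α := by
      have hind : ∀ α : ℝ, S.indicator (fun a => h (-a)) α = S.indicator h (-α) := by
        intro α
        have hmem : α ∈ S ↔ -α ∈ S := by simp [hSdef]
        by_cases hα : α ∈ S
        · rw [indicator_of_mem hα, indicator_of_mem (hmem.mp hα)]
        · rw [indicator_of_notMem hα, indicator_of_notMem (fun hc => hα (hmem.mpr hc))]
      calc (∫ α in S, h (-α)) = ∫ α, S.indicator (fun a => h (-a)) α :=
            (integral_indicator hS).symm
        _ = ∫ α, S.indicator h (-α) := by simp_rw [hind]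
        _ = ∫ α, S.indicator h α := integral_neg_eq_self _ _
        _ = ∫ α in S, h α := integral_indicator hS
    have : (∫ α in S, h α) = -∫ α in S, h α := by
      calc (∫ α in S, h α) = ∫ α in S, -h (-α) := by simp_rw [← hodd]
        _ = -∫ α in S, h (-α) := integral_neg _
        _ = -∫ α in S, h α := by rw [hsymm]
    have hzero : (∫ α in S, h α) = 0 := by linarith
    rw [fub1, fub2]
    exact hzero
  -- the truncated integrals tend to ∫ L, but they are eventually 0
  have hzero_lim : Tendsto (fun ε : ℝ =>
      ∫ x : ℝ, ∫ α in {a : ℝ | ε ≤ |a|}, F (x, α))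
      (nhdsWithin 0 (Ioi 0)) (nhds (0 : ℝ)) := by
    apply Tendsto.congr' _ tendsto_const_nhds
    filter_upwards [self_mem_nhdsWithin] with ε (hε : ε ∈ Ioi 0)
    exact (key ε hε).symm
  exact tendsto_nhds_unique hunif hzero_lim
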